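/- arXiv:0812.0982 — 2 statements merged into one kernel-verified Lean document; each statement's English description precedes it below -/
import Mathlib

section
/- Let d ≥ 1, α ∈ (0,1), β ∈ (0,1) with α+β ∈ (0,1)∪(1,2). There exists a constant c, depending only on d, α, β, such that for every f ∈ C^{α+β}(ℝ^d) and all x, k ∈ ℝ^d, ∫_{ℝ^d∖{0}} |E_h f(x+k) − E_h f(x)| · |h|^{−(d+α)} dh ≤ c·|k|^β·‖f‖_{C^{α+β}}, where E_h f(x) = f(x+h) − f(x). -/
open MeasureTheory ENNReal NNReal

noncomputable section

/-- Euclidean space `ℝ^d`. -/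
abbrev E (d : ℕ) := EuclideanSpace ℝ (Fin d)

/-- Sup norm (as an extended nonnegative real). -/
def supNorm {d : ℕ} (f : E d → ℝ) : ℝ≥0∞ := ⨆ x, (‖f x‖₊ : ℝ≥0∞)

/-- Hölder seminorm of order `γ`. -/
def hSemi {d : ℕ} (γ : ℝ) (f : E d → ℝ) : ℝ≥0∞ :=
  ⨆ x, ⨆ h, (‖f (x + h) - f x‖₊ : ℝ≥0∞) / (‖h‖₊ : ℝ≥0∞) ^ γ

/-- Partial derivative in the `i`-th coordinate direction. -/
def pd {d : ℕ} (i : Fin d) (f : E d → ℝ) : E d → ℝ :=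
  fun x => fderiv ℝ f x (EuclideanSpace.single i 1)

/-- Hölder norm `‖f‖_{C^γ}` for non-integer `γ ∈ (0,3)`. -/
def holderNorm {d : ℕ} (γ : ℝ) (f : E d → ℝ) : ℝ≥0∞ :=
  if γ < 1 then supNorm f + hSemi γ f
  else if γ < 2 then supNorm f + ∑ i : Fin d, hSemi (γ - 1) (pd i f)
  else supNorm f + ∑ i : Fin d, ∑ j : Fin d, hSemi (γ - 2) (pd i (pd j f))

/-- `f` belongs to the Hölder space `C^γ(ℝ^d)`. -/
def InHolder {d : ℕ} (γ : ℝ) (f : E d → ℝ) : Prop :=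
  ContDiff ℝ (⌊γ⌋₊ : ℕ) f ∧ holderNorm γ f < ⊤


/-- First difference operator `E_h f(x) = f(x+h) - f(x)`. -/
def Ediff {d : ℕ} (f : E d → ℝ) (h x : E d) : ℝ := f (x + h) - f x

/- ### Auxiliary lemmas -/

lemma rpow_anti' {x y : ℝ≥0∞} (h : x ≤ y) {s : ℝ} (hs : s ≤ 0) : y ^ s ≤ x ^ s := by
  have h2 := ENNReal.inv_le_inv.2 (ENNReal.rpow_le_rpow h (neg_nonneg.2 hs))
  rwa [← ENNReal.rpow_neg, ← ENNReal.rpow_neg, neg_neg] at h2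

lemma nn_arith (R : ℝ≥0) (hR : R ≠ 0) (s : ℝ) (d n : ℕ) :
    ((R * 2⁻¹ ^ (n+1) : ℝ≥0) ^ s * (R * 2⁻¹ ^ n : ℝ≥0) ^ (d:ℝ) : ℝ≥0)
    = R ^ ((d:ℝ) + s) * 2 ^ (-s) * (2 ^ (-((d:ℝ)+s)) : ℝ≥0) ^ n := by
  have h2 : ((2:ℝ≥0)⁻¹) = 2 ^ (-1:ℝ) := by rw [NNReal.rpow_neg_one]
  rw [mul_assoc, ← NNReal.rpow_natCast (2 ^ (-((d:ℝ)+s)) : ℝ≥0) n, ← NNReal.rpow_mul,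
    ← NNReal.rpow_add two_ne_zero,
    h2, ← NNReal.rpow_natCast ((2:ℝ≥0) ^ (-1:ℝ)) (n+1), ← NNReal.rpow_natCast ((2:ℝ≥0) ^ (-1:ℝ)) n,
    ← NNReal.rpow_mul, ← NNReal.rpow_mul, NNReal.mul_rpow, NNReal.mul_rpow,
    ← NNReal.rpow_mul, ← NNReal.rpow_mul,
    mul_mul_mul_comm, ← NNReal.rpow_add hR, ← NNReal.rpow_add two_ne_zero]
  congr 1
  · congr 1; ring
  · congr 1; push_cast; ring

lemma nn_arith2 (R : ℝ≥0) (hR : R ≠ 0) (s : ℝ) (d n : ℕ) :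
    ((R * 2 ^ n : ℝ≥0) ^ s * (R * 2 ^ (n+1) : ℝ≥0) ^ (d:ℝ) : ℝ≥0)
    = R ^ ((d:ℝ) + s) * 2 ^ (d:ℝ) * (2 ^ ((d:ℝ)+s) : ℝ≥0) ^ n := by
  rw [mul_assoc, ← NNReal.rpow_natCast (2 ^ (((d:ℝ)+s)) : ℝ≥0) n, ← NNReal.rpow_mul,
    ← NNReal.rpow_add two_ne_zero,
    ← NNReal.rpow_natCast (2:ℝ≥0) (n+1), ← NNReal.rpow_natCast (2:ℝ≥0) n,
    NNReal.mul_rpow, NNReal.mul_rpow,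
    ← NNReal.rpow_mul, ← NNReal.rpow_mul,
    mul_mul_mul_comm, ← NNReal.rpow_add hR, ← NNReal.rpow_add two_ne_zero]
  congr 1
  · congr 1; ring
  · congr 1; push_cast; ring

/-- integral of `‖h‖^s` over a ball of radius `R`, for `s ∈ (-d, 0)`. -/
lemma small_int (d : ℕ) (hd : 0 < d) {s : ℝ} (hs : -(d:ℝ) < s) (hs0 : s < 0) :
    ∃ C : ℝ≥0∞, C ≠ ⊤ ∧ ∀ R : ℝ≥0, R ≠ 0 →
      (∫⁻ h : E d in Metric.ball 0 (R:ℝ), (‖h‖₊ : ℝ≥0∞) ^ s)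
        ≤ C * (R : ℝ≥0∞) ^ ((d:ℝ) + s) := by
  haveI : Nonempty (Fin d) := ⟨⟨0, hd⟩⟩
  set V : ℝ≥0∞ := volume (Metric.ball (0 : E d) 1) with hV
  have hVtop : V ≠ ⊤ := measure_ball_lt_top.ne
  set q : ℝ≥0 := 2 ^ (-((d:ℝ)+s)) with hq
  have hq1 : q < 1 := NNReal.rpow_lt_one_of_one_lt_of_neg one_lt_two (by linarith)
  refine ⟨((2:ℝ≥0) ^ (-s) : ℝ≥0) * V * (1 - (q:ℝ≥0∞))⁻¹, ?_, ?_⟩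
  · refine ENNReal.mul_ne_top (ENNReal.mul_ne_top coe_ne_top hVtop) (ENNReal.inv_ne_top.2 ?_)
    simp only [ne_eq, tsub_eq_zero_iff_le, not_le]
    exact_mod_cast hq1
  intro R hR
  have hRpos : (0:ℝ) < R := by positivity
  set A : ℕ → Set (E d) := fun n =>
    Metric.ball 0 ((R * 2⁻¹ ^ n : ℝ≥0) : ℝ) \ Metric.ball 0 ((R * 2⁻¹ ^ (n+1) : ℝ≥0) : ℝ) with hA
  have hcover : Metric.ball (0 : E d) (R:ℝ) \ {0} ⊆ ⋃ n, A n := by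
    rintro h ⟨hball, hne⟩
    have hpos : 0 < ‖h‖ := norm_pos_iff.2 hne
    have hlt : ‖h‖ < R := by simpa [mem_ball_zero_iff] using hball
    have hex : ∃ n : ℕ, ((R * 2⁻¹ ^ (n+1) : ℝ≥0) : ℝ) ≤ ‖h‖ := by
      obtain ⟨n, hn⟩ := exists_pow_lt_of_lt_one (div_pos hpos hRpos)
        (by norm_num : (2⁻¹ : ℝ) < 1)
      refine ⟨n, ?_⟩
      push_cast
      have h1 : ((2:ℝ)⁻¹) ^ (n+1) ≤ 2⁻¹ ^ n := by
        apply pow_le_pow_of_le_one (by norm_num) (by norm_num); omega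
      have h2 : (R:ℝ) * (2⁻¹ ^ n) < ‖h‖ := by
        rw [mul_comm, ← lt_div_iff₀ hRpos]
        exact hn
      nlinarith
    refine Set.mem_iUnion.2 ⟨Nat.find hex, ?_, ?_⟩
    · rw [mem_ball_zero_iff]
      rcases Nat.eq_zero_or_pos (Nat.find hex) with h0 | h0
      · rw [h0]; push_cast; simpa using hlt
      · have hm := Nat.find_min hex (m := Nat.find hex - 1) (by omega)
        push_neg at hm
        have : ‖h‖ < ((R * 2⁻¹ ^ (Nat.find hex - 1 + 1) : ℝ≥0) : ℝ) := hm
        rwa [Nat.sub_add_cancel h0] at this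
    · intro hc
      rw [mem_ball_zero_iff] at hc
      exact absurd (Nat.find_spec hex) (not_le.2 hc)
  have hnull : (volume : Measure (E d)) {(0:E d)} = 0 := measure_singleton 0
  have hrne : ∀ n : ℕ, (R * 2⁻¹ ^ n : ℝ≥0) ≠ 0 := fun n => by positivity
  calc
    (∫⁻ h : E d in Metric.ball 0 (R:ℝ), (‖h‖₊ : ℝ≥0∞) ^ s)
        = ∫⁻ h : E d in Metric.ball 0 (R:ℝ) \ {0}, (‖h‖₊ : ℝ≥0∞) ^ s := by
      refine (setLIntegral_congr ?_).symm
      exact diff_ae_eq_self.2 (measure_mono_null Set.inter_subset_right hnull)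
    _ ≤ ∫⁻ h : E d in ⋃ n, A n, (‖h‖₊ : ℝ≥0∞) ^ s := lintegral_mono_set hcover
    _ ≤ ∑' n, ∫⁻ h : E d in A n, (‖h‖₊ : ℝ≥0∞) ^ s := lintegral_iUnion_le _ _
    _ ≤ ∑' n, ((((R * 2⁻¹ ^ (n+1) : ℝ≥0) ^ s * (R * 2⁻¹ ^ n : ℝ≥0) ^ (d:ℝ) : ℝ≥0)) : ℝ≥0∞) * V := by
      refine ENNReal.tsum_le_tsum fun n => ?_
      have hmeas : MeasurableSet (A n) := measurableSet_ball.diff measurableSet_ball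
      calc ∫⁻ h : E d in A n, (‖h‖₊ : ℝ≥0∞) ^ s
          ≤ ∫⁻ _ : E d in A n, (((R * 2⁻¹ ^ (n+1) : ℝ≥0) ^ s : ℝ≥0) : ℝ≥0∞) := by
            refine setLIntegral_mono' hmeas fun h hh => ?_
            have hlb : ((R * 2⁻¹ ^ (n+1) : ℝ≥0) : ℝ) ≤ ‖h‖ := by
              have h2 := hh.2
              rw [Metric.mem_ball, not_lt, dist_zero_right] at h2
              exact h2
            have hxlb : ((R * 2⁻¹ ^ (n+1) : ℝ≥0) : ℝ≥0∞) ≤ (‖h‖₊ : ℝ≥0∞) := by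
              rw [ENNReal.coe_le_coe, ← NNReal.coe_le_coe]
              simpa using hlb
            rw [ENNReal.coe_rpow_of_ne_zero (hrne (n+1))]
            exact rpow_anti' hxlb hs0.le
          _ = (((R * 2⁻¹ ^ (n+1) : ℝ≥0) ^ s : ℝ≥0) : ℝ≥0∞) * volume (A n) :=
            setLIntegral_const _ _
          _ ≤ (((R * 2⁻¹ ^ (n+1) : ℝ≥0) ^ s : ℝ≥0) : ℝ≥0∞) *
              ((((R * 2⁻¹ ^ n : ℝ≥0) ^ (d:ℝ) : ℝ≥0)) * V) := by
            gcongr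
            have hsub : volume (A n) ≤ volume (Metric.ball (0:E d) ((R * 2⁻¹ ^ n : ℝ≥0) : ℝ)) :=
              measure_mono Set.diff_subset
            refine hsub.trans_eq ?_
            rw [Measure.addHaar_ball volume (0:E d) (NNReal.coe_nonneg _),
              finrank_euclideanSpace_fin]
            congr 1
            rw [NNReal.rpow_natCast, ← ENNReal.ofReal_coe_nnreal]
            push_cast
            ring
          _ = ((((R * 2⁻¹ ^ (n+1) : ℝ≥0) ^ s * (R * 2⁻¹ ^ n : ℝ≥0) ^ (d:ℝ) : ℝ≥0)) : ℝ≥0∞) * V := by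
            rw [← mul_assoc, ← ENNReal.coe_mul]
    _ = ((2:ℝ≥0) ^ (-s) : ℝ≥0) * V * (1 - (q:ℝ≥0∞))⁻¹ * (R : ℝ≥0∞) ^ ((d:ℝ) + s) := by
      simp_rw [nn_arith R hR s d _, ENNReal.coe_mul, ENNReal.coe_pow]
      rw [ENNReal.tsum_mul_right, ENNReal.tsum_mul_left, ENNReal.tsum_geometric,
        ENNReal.coe_rpow_of_ne_zero hR]
      ring

/-- integral of `‖h‖^s` over the complement of a ball of radius `R`, for `s < -d`. -/
lemma big_int (d : ℕ) (hd : 0 < d) {s : ℝ} (hs : s < -(d:ℝ)) :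
    ∃ C : ℝ≥0∞, C ≠ ⊤ ∧ ∀ R : ℝ≥0, R ≠ 0 →
      (∫⁻ h : E d in (Metric.ball 0 (R:ℝ))ᶜ, (‖h‖₊ : ℝ≥0∞) ^ s)
        ≤ C * (R : ℝ≥0∞) ^ ((d:ℝ) + s) := by
  haveI : Nonempty (Fin d) := ⟨⟨0, hd⟩⟩
  have hs0 : s < 0 := by
    have : (0:ℝ) ≤ d := Nat.cast_nonneg d
    linarith
  set V : ℝ≥0∞ := volume (Metric.ball (0 : E d) 1) with hV
  have hVtop : V ≠ ⊤ := measure_ball_lt_top.ne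
  set q : ℝ≥0 := 2 ^ (((d:ℝ)+s)) with hq
  have hq1 : q < 1 := NNReal.rpow_lt_one_of_one_lt_of_neg one_lt_two (by linarith)
  refine ⟨((2:ℝ≥0) ^ (d:ℝ) : ℝ≥0) * V * (1 - (q:ℝ≥0∞))⁻¹, ?_, ?_⟩
  · refine ENNReal.mul_ne_top (ENNReal.mul_ne_top coe_ne_top hVtop) (ENNReal.inv_ne_top.2 ?_)
    simp only [ne_eq, tsub_eq_zero_iff_le, not_le]
    exact_mod_cast hq1
  intro R hR
  have hRpos : (0:ℝ) < R := by positivity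
  set A : ℕ → Set (E d) := fun n =>
    Metric.ball 0 ((R * 2 ^ (n+1) : ℝ≥0) : ℝ) \ Metric.ball 0 ((R * 2 ^ n : ℝ≥0) : ℝ) with hA
  have hcover : (Metric.ball (0 : E d) (R:ℝ))ᶜ ⊆ ⋃ n, A n := by
    intro h hball
    rw [Set.mem_compl_iff, mem_ball_zero_iff, not_lt] at hball
    have hex : ∃ n : ℕ, ‖h‖ < ((R * 2 ^ (n+1) : ℝ≥0) : ℝ) := by
      obtain ⟨n, hn⟩ := pow_unbounded_of_one_lt (‖h‖ / R) (by norm_num : (1:ℝ) < 2)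
      refine ⟨n, ?_⟩
      push_cast
      rw [div_lt_iff₀ hRpos] at hn
      calc ‖h‖ < 2 ^ n * R := hn
        _ ≤ (R:ℝ) * 2 ^ (n+1) := by
          rw [mul_comm]
          have : (2:ℝ) ^ n ≤ 2 ^ (n+1) := by
            apply pow_le_pow_right₀ (by norm_num); omega
          nlinarith
    refine Set.mem_iUnion.2 ⟨Nat.find hex, ?_, ?_⟩
    · rw [mem_ball_zero_iff]; exact Nat.find_spec hex
    · intro hc
      rw [mem_ball_zero_iff] at hc
      rcases Nat.eq_zero_or_pos (Nat.find hex) with h0 | h0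
      · rw [h0] at hc; push_cast at hc; simp at hc; linarith
      · have hm := Nat.find_min hex (m := Nat.find hex - 1) (by omega)
        push_neg at hm
        rw [Nat.sub_add_cancel h0] at hm
        exact absurd hc (not_lt.2 hm)
  have hrne : ∀ n : ℕ, (R * 2 ^ n : ℝ≥0) ≠ 0 := fun n => by positivity
  calc
    (∫⁻ h : E d in (Metric.ball 0 (R:ℝ))ᶜ, (‖h‖₊ : ℝ≥0∞) ^ s)
        ≤ ∫⁻ h : E d in ⋃ n, A n, (‖h‖₊ : ℝ≥0∞) ^ s := lintegral_mono_set hcover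
    _ ≤ ∑' n, ∫⁻ h : E d in A n, (‖h‖₊ : ℝ≥0∞) ^ s := lintegral_iUnion_le _ _
    _ ≤ ∑' n, ((((R * 2 ^ n : ℝ≥0) ^ s * (R * 2 ^ (n+1) : ℝ≥0) ^ (d:ℝ) : ℝ≥0)) : ℝ≥0∞) * V := by
      refine ENNReal.tsum_le_tsum fun n => ?_
      have hmeas : MeasurableSet (A n) := measurableSet_ball.diff measurableSet_ball
      calc ∫⁻ h : E d in A n, (‖h‖₊ : ℝ≥0∞) ^ s
          ≤ ∫⁻ _ : E d in A n, (((R * 2 ^ n : ℝ≥0) ^ s : ℝ≥0) : ℝ≥0∞) := by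
            refine setLIntegral_mono' hmeas fun h hh => ?_
            have hlb : ((R * 2 ^ n : ℝ≥0) : ℝ) ≤ ‖h‖ := by
              have h2 := hh.2
              rw [Metric.mem_ball, not_lt, dist_zero_right] at h2
              exact h2
            have hxlb : ((R * 2 ^ n : ℝ≥0) : ℝ≥0∞) ≤ (‖h‖₊ : ℝ≥0∞) := by
              rw [ENNReal.coe_le_coe, ← NNReal.coe_le_coe]
              simpa using hlb
            rw [ENNReal.coe_rpow_of_ne_zero (hrne n)]
            exact rpow_anti' hxlb hs0.le
          _ = (((R * 2 ^ n : ℝ≥0) ^ s : ℝ≥0) : ℝ≥0∞) * volume (A n) :=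
            setLIntegral_const _ _
          _ ≤ (((R * 2 ^ n : ℝ≥0) ^ s : ℝ≥0) : ℝ≥0∞) *
              ((((R * 2 ^ (n+1) : ℝ≥0) ^ (d:ℝ) : ℝ≥0)) * V) := by
            gcongr
            have hsub : volume (A n) ≤ volume (Metric.ball (0:E d) ((R * 2 ^ (n+1) : ℝ≥0) : ℝ)) :=
              measure_mono Set.diff_subset
            refine hsub.trans_eq ?_
            rw [Measure.addHaar_ball volume (0:E d) (NNReal.coe_nonneg _),
              finrank_euclideanSpace_fin]
            congr 1
            rw [NNReal.rpow_natCast, ← ENNReal.ofReal_coe_nnreal]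
            push_cast
            ring
          _ = ((((R * 2 ^ n : ℝ≥0) ^ s * (R * 2 ^ (n+1) : ℝ≥0) ^ (d:ℝ) : ℝ≥0)) : ℝ≥0∞) * V := by
            rw [← mul_assoc, ← ENNReal.coe_mul]
    _ = ((2:ℝ≥0) ^ (d:ℝ) : ℝ≥0) * V * (1 - (q:ℝ≥0∞))⁻¹ * (R : ℝ≥0∞) ^ ((d:ℝ) + s) := by
      simp_rw [nn_arith2 R hR s d _, ENNReal.coe_mul, ENNReal.coe_pow]
      rw [ENNReal.tsum_mul_right, ENNReal.tsum_mul_left, ENNReal.tsum_geometric,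
        ENNReal.coe_rpow_of_ne_zero hR]
      ring

lemma hSemi_le {d : ℕ} {γ : ℝ} (hγ : 0 < γ) (f : E d → ℝ) (y u : E d) :
    (‖f (y + u) - f y‖₊ : ℝ≥0∞) ≤ hSemi γ f * (‖u‖₊ : ℝ≥0∞) ^ γ := by
  by_cases hu : u = 0
  · simp [hu]
  · have hb0 : ((‖u‖₊ : ℝ≥0∞) ^ γ) ≠ 0 := by
      rw [ne_eq, ENNReal.rpow_eq_zero_iff_of_pos hγ]
      simpa using hu
    have hbt : ((‖u‖₊ : ℝ≥0∞) ^ γ) ≠ ⊤ :=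
      ENNReal.rpow_ne_top_of_nonneg hγ.le ENNReal.coe_ne_top
    have h1 : (‖f (y + u) - f y‖₊ : ℝ≥0∞) / (‖u‖₊ : ℝ≥0∞) ^ γ ≤ hSemi γ f :=
      le_iSup₂ (f := fun x h => (‖f (x + h) - f x‖₊ : ℝ≥0∞) / (‖h‖₊ : ℝ≥0∞) ^ γ) y u
    calc (‖f (y + u) - f y‖₊ : ℝ≥0∞)
        = (‖f (y + u) - f y‖₊ : ℝ≥0∞) / (‖u‖₊ : ℝ≥0∞) ^ γ * (‖u‖₊ : ℝ≥0∞) ^ γ := by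
          rw [ENNReal.div_mul_cancel hb0 hbt]
      _ ≤ hSemi γ f * (‖u‖₊ : ℝ≥0∞) ^ γ := by gcongr

lemma coord_le {d : ℕ} (v : E d) (i : Fin d) : |v i| ≤ ‖v‖ := by
  rw [EuclideanSpace.norm_eq]
  rw [show |v i| = Real.sqrt (‖v i‖^2) by rw [Real.norm_eq_abs, Real.sqrt_sq_eq_abs, abs_abs]]
  apply Real.sqrt_le_sqrt
  exact Finset.single_le_sum (f := fun j => ‖v j‖^2) (fun j _ => by positivity) (Finset.mem_univ i)

lemma fderiv_apply_eq {d : ℕ} (f : E d → ℝ) (y : E d) (v : E d) :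
    fderiv ℝ f y v = ∑ i, v i * pd i f y := by
  conv_lhs => rw [← OrthonormalBasis.sum_repr (EuclideanSpace.basisFun (Fin d) ℝ) v]
  rw [map_sum]
  congr 1
  ext i
  rw [EuclideanSpace.basisFun_repr, EuclideanSpace.basisFun_apply, ContinuousLinearMap.map_smul]
  simp [pd, smul_eq_mul]

lemma fderiv_diff_apply_le {d : ℕ} (f : E d → ℝ) {L τ : ℝ} (hL : 0 ≤ L)
    (hpd : ∀ (i : Fin d) (y z : E d), ‖pd i f y - pd i f z‖ ≤ L * ‖y - z‖ ^ τ)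
    (y z v : E d) :
    ‖fderiv ℝ f y v - fderiv ℝ f z v‖ ≤ ((d:ℝ) * L * ‖y - z‖ ^ τ) * ‖v‖ := by
  rw [fderiv_apply_eq, fderiv_apply_eq, ← Finset.sum_sub_distrib]
  calc ‖∑ i, (v i * pd i f y - v i * pd i f z)‖
      ≤ ∑ i, ‖v i * (pd i f y - pd i f z)‖ := by
        refine (norm_sum_le _ _).trans_eq ?_
        congr 1; ext i; rw [mul_sub]
    _ ≤ ∑ _i : Fin d, ‖v‖ * (L * ‖y - z‖ ^ τ) := by
        refine Finset.sum_le_sum fun i _ => ?_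
        rw [norm_mul]
        have h1 : ‖v i‖ ≤ ‖v‖ := by rw [Real.norm_eq_abs]; exact coord_le v i
        have h2 : ‖pd i f y - pd i f z‖ ≤ L * ‖y - z‖ ^ τ := hpd i y z
        have h3 : (0:ℝ) ≤ ‖pd i f y - pd i f z‖ := norm_nonneg _
        have h4 : (0:ℝ) ≤ ‖v i‖ := norm_nonneg _
        nlinarith [norm_nonneg v]
    _ = ((d:ℝ) * L * ‖y - z‖ ^ τ) * ‖v‖ := by
        rw [Finset.sum_const, Finset.card_univ, Fintype.card_fin, nsmul_eq_mul]
        ring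

lemma diff_diff_le {d : ℕ} (f : E d → ℝ) (hf : Differentiable ℝ f) {L τ : ℝ} (hL : 0 ≤ L)
    (hpd : ∀ (i : Fin d) (y z : E d), ‖pd i f y - pd i f z‖ ≤ L * ‖y - z‖ ^ τ)
    (x k h : E d) :
    ‖(f (x + k + h) - f (x + k)) - (f (x + h) - f x)‖ ≤ ((d:ℝ) * L * ‖k‖ ^ τ) * ‖h‖ := by
  set g : E d → ℝ := fun y => f (y + k) - f y with hg
  have hgd : ∀ y : E d, HasFDerivAt g (fderiv ℝ f (y + k) - fderiv ℝ f y) y := by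
    intro y
    have h1 : HasFDerivAt (fun y : E d => f (y + k)) (fderiv ℝ f (y + k)) y :=
      (HasFDerivAt.comp y (hf (y + k)).hasFDerivAt ((hasFDerivAt_id y).add_const k)).congr_fderiv
        (by simp)
    exact h1.sub (hf y).hasFDerivAt
  have hbound : ∀ y : E d, ‖fderiv ℝ g y‖ ≤ (d:ℝ) * L * ‖k‖ ^ τ := by
    intro y
    rw [(hgd y).fderiv]
    refine ContinuousLinearMap.opNorm_le_bound _ (by positivity) fun v => ?_
    have := fderiv_diff_apply_le f hL hpd (y + k) y v
    simpa [add_sub_cancel_left] using this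
  have key := Convex.norm_image_sub_le_of_norm_fderiv_le
    (f := g) (C := (d:ℝ) * L * ‖k‖ ^ τ) (s := Set.univ)
    (fun y _ => (hgd y).differentiableAt) (fun y _ => hbound y) convex_univ
    (Set.mem_univ x) (Set.mem_univ (x + h))
  have heq : g (x + h) - g x = (f (x + k + h) - f (x + k)) - (f (x + h) - f x) := by
    simp only [hg]
    rw [show x + h + k = x + k + h by abel]
    ring
  rw [← heq]
  simpa [add_sub_cancel_left] using key

lemma div_rpow_collect {x : ℝ≥0∞} (hx : x ≠ 0) (hxt : x ≠ ⊤) (a : ℝ≥0∞) (s t : ℝ) :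
    a * x ^ s / x ^ t = a * x ^ (s - t) := by
  rw [div_eq_mul_inv, ← ENNReal.rpow_neg, mul_assoc, ← ENNReal.rpow_add _ _ hx hxt,
    sub_eq_add_neg]

/-- integrated first-difference estimate, case `α ∈ (0,1)`. -/
theorem integrated_first_difference_estimate
    (d : ℕ) (hd : 1 ≤ d) (α β : ℝ)
    (hα : α ∈ Set.Ioo (0 : ℝ) 1) (hβ : β ∈ Set.Ioo (0 : ℝ) 1) (hαβ : α + β ≠ 1) :
    ∃ c : ℝ≥0, ∀ f : E d → ℝ, InHolder (α + β) f → ∀ x k : E d,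
      (∫⁻ h, (‖Ediff f h (x + k) - Ediff f h x‖₊ : ℝ≥0∞) / (‖h‖₊ : ℝ≥0∞) ^ ((d : ℝ) + α))
        ≤ c * (‖k‖₊ : ℝ≥0∞) ^ β * holderNorm (α + β) f := by
  obtain ⟨hα0, hα1⟩ := hα
  obtain ⟨hβ0, hβ1⟩ := hβ
  have hd0 : 0 < d := hd
  have hd1 : (1:ℝ) ≤ d := by exact_mod_cast hd
  have hmeas : ∀ s : ℝ, Measurable (fun h : E d => (‖h‖₊ : ℝ≥0∞) ^ s) := by
    intro s; fun_prop
  rcases lt_or_gt_of_ne hαβ with hlt | hgt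
  -- ### Case γ = α + β < 1
  · obtain ⟨C1, hC1top, hC1⟩ := small_int d hd0 (s := β - (d:ℝ))
      (by linarith) (by linarith)
    obtain ⟨C2, hC2top, hC2⟩ := big_int d hd0 (s := -((d:ℝ) + α)) (by linarith)
    refine ⟨(2*(C1+C2)).toNNReal, ?_⟩
    have hctop : (2*(C1+C2)) ≠ ⊤ := by
      refine ENNReal.mul_ne_top (by norm_num) (by simp [hC1top, hC2top])
    have hc : ((2*(C1+C2)).toNNReal : ℝ≥0∞) = 2*(C1+C2) := ENNReal.coe_toNNReal hctop
    intro f hf x k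
    by_cases hk : k = 0
    · simp only [hk, add_zero, sub_self, nnnorm_zero, ENNReal.coe_zero, ENNReal.zero_div,
        lintegral_zero]
      exact zero_le
    set H := hSemi (α + β) f with hH
    have hHle : H ≤ holderNorm (α + β) f := by
      rw [holderNorm, if_pos hlt]
      exact le_add_self
    set R : ℝ≥0 := ‖k‖₊ with hRdef
    have hR : R ≠ 0 := by simpa [hRdef] using hk
    have hRne0 : (R : ℝ≥0∞) ≠ 0 := by simpa using hR
    have hγpos : 0 < α + β := by linarith
    -- numerator bounds
    have hnum_small : ∀ h : E d,
        (‖Ediff f h (x + k) - Ediff f h x‖₊ : ℝ≥0∞) ≤ 2 * H * (‖h‖₊ : ℝ≥0∞) ^ (α + β) := by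
      intro h
      calc (‖Ediff f h (x + k) - Ediff f h x‖₊ : ℝ≥0∞)
          ≤ (‖Ediff f h (x + k)‖₊ : ℝ≥0∞) + (‖Ediff f h x‖₊ : ℝ≥0∞) := by
            exact_mod_cast nnnorm_sub_le _ _
        _ ≤ H * (‖h‖₊ : ℝ≥0∞) ^ (α + β) + H * (‖h‖₊ : ℝ≥0∞) ^ (α + β) :=
            add_le_add (hSemi_le hγpos f (x+k) h) (hSemi_le hγpos f x h)
        _ = 2 * H * (‖h‖₊ : ℝ≥0∞) ^ (α + β) := by ring
    have hswap : ∀ h : E d, Ediff f h (x + k) - Ediff f h x = Ediff f k (x + h) - Ediff f k x := by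
      intro h
      simp only [Ediff]
      rw [show x + k + h = x + h + k by abel]
      ring
    have hnum_big : ∀ h : E d,
        (‖Ediff f h (x + k) - Ediff f h x‖₊ : ℝ≥0∞) ≤ 2 * H * (R : ℝ≥0∞) ^ (α + β) := by
      intro h
      rw [hswap h]
      calc (‖Ediff f k (x + h) - Ediff f k x‖₊ : ℝ≥0∞)
          ≤ (‖Ediff f k (x + h)‖₊ : ℝ≥0∞) + (‖Ediff f k x‖₊ : ℝ≥0∞) := by
            exact_mod_cast nnnorm_sub_le _ _
        _ ≤ H * (R : ℝ≥0∞) ^ (α + β) + H * (R : ℝ≥0∞) ^ (α + β) :=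
            add_le_add (hSemi_le hγpos f (x+h) k) (hSemi_le hγpos f x k)
        _ = 2 * H * (R : ℝ≥0∞) ^ (α + β) := by ring
    -- integrand bounds
    have hint_small : ∀ h ∈ Metric.ball (0 : E d) (R:ℝ),
        (‖Ediff f h (x + k) - Ediff f h x‖₊ : ℝ≥0∞) / (‖h‖₊ : ℝ≥0∞) ^ ((d : ℝ) + α)
          ≤ 2 * H * (‖h‖₊ : ℝ≥0∞) ^ (β - (d:ℝ)) := by
      intro h _
      by_cases hh : h = 0
      · simp [hh, Ediff]
      · have hne : (‖h‖₊ : ℝ≥0∞) ≠ 0 := by simpa using hh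
        calc (‖Ediff f h (x + k) - Ediff f h x‖₊ : ℝ≥0∞) / (‖h‖₊ : ℝ≥0∞) ^ ((d : ℝ) + α)
            ≤ (2 * H * (‖h‖₊ : ℝ≥0∞) ^ (α + β)) / (‖h‖₊ : ℝ≥0∞) ^ ((d : ℝ) + α) :=
              ENNReal.div_le_div_right (hnum_small h) _
          _ = 2 * H * (‖h‖₊ : ℝ≥0∞) ^ ((α + β) - ((d:ℝ) + α)) :=
              div_rpow_collect hne ENNReal.coe_ne_top _ _ _
          _ = 2 * H * (‖h‖₊ : ℝ≥0∞) ^ (β - (d:ℝ)) := by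
              rw [show (α + β) - ((d:ℝ) + α) = β - (d:ℝ) by ring]
    have hint_big : ∀ h ∈ (Metric.ball (0 : E d) (R:ℝ))ᶜ,
        (‖Ediff f h (x + k) - Ediff f h x‖₊ : ℝ≥0∞) / (‖h‖₊ : ℝ≥0∞) ^ ((d : ℝ) + α)
          ≤ (2 * H * (R : ℝ≥0∞) ^ (α + β)) * (‖h‖₊ : ℝ≥0∞) ^ (-((d:ℝ) + α)) := by
      intro h hh
      rw [Set.mem_compl_iff, mem_ball_zero_iff, not_lt] at hh
      have hhne : h ≠ 0 := by
        intro hc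
        rw [hc, norm_zero] at hh
        have : (0:ℝ) < R := by positivity
        linarith
      have hne : (‖h‖₊ : ℝ≥0∞) ≠ 0 := by simpa using hhne
      calc (‖Ediff f h (x + k) - Ediff f h x‖₊ : ℝ≥0∞) / (‖h‖₊ : ℝ≥0∞) ^ ((d : ℝ) + α)
          ≤ (2 * H * (R : ℝ≥0∞) ^ (α + β)) / (‖h‖₊ : ℝ≥0∞) ^ ((d : ℝ) + α) :=
            ENNReal.div_le_div_right (hnum_big h) _
        _ = (2 * H * (R : ℝ≥0∞) ^ (α + β)) * (‖h‖₊ : ℝ≥0∞) ^ (-((d:ℝ) + α)) := by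
            rw [div_eq_mul_inv, ← ENNReal.rpow_neg]
    have hpow : (R : ℝ≥0∞) ^ (α + β) * (R : ℝ≥0∞) ^ (-α) = (R : ℝ≥0∞) ^ β := by
      rw [← ENNReal.rpow_add _ _ hRne0 ENNReal.coe_ne_top]
      norm_num
    calc (∫⁻ h, (‖Ediff f h (x + k) - Ediff f h x‖₊ : ℝ≥0∞) / (‖h‖₊ : ℝ≥0∞) ^ ((d : ℝ) + α))
        = (∫⁻ h in Metric.ball (0 : E d) (R:ℝ),
            (‖Ediff f h (x + k) - Ediff f h x‖₊ : ℝ≥0∞) / (‖h‖₊ : ℝ≥0∞) ^ ((d : ℝ) + α))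
          + (∫⁻ h in (Metric.ball (0 : E d) (R:ℝ))ᶜ,
            (‖Ediff f h (x + k) - Ediff f h x‖₊ : ℝ≥0∞) / (‖h‖₊ : ℝ≥0∞) ^ ((d : ℝ) + α)) :=
          (lintegral_add_compl _ measurableSet_ball).symm
      _ ≤ (∫⁻ h in Metric.ball (0 : E d) (R:ℝ), 2 * H * (‖h‖₊ : ℝ≥0∞) ^ (β - (d:ℝ)))
          + (∫⁻ h in (Metric.ball (0 : E d) (R:ℝ))ᶜ,
              (2 * H * (R : ℝ≥0∞) ^ (α + β)) * (‖h‖₊ : ℝ≥0∞) ^ (-((d:ℝ) + α))) :=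
          add_le_add (setLIntegral_mono' measurableSet_ball hint_small)
            (setLIntegral_mono' measurableSet_ball.compl hint_big)
      _ = 2 * H * (∫⁻ h in Metric.ball (0 : E d) (R:ℝ), (‖h‖₊ : ℝ≥0∞) ^ (β - (d:ℝ)))
          + (2 * H * (R : ℝ≥0∞) ^ (α + β)) *
            (∫⁻ h in (Metric.ball (0 : E d) (R:ℝ))ᶜ, (‖h‖₊ : ℝ≥0∞) ^ (-((d:ℝ) + α))) := by
          rw [lintegral_const_mul _ (hmeas _), lintegral_const_mul _ (hmeas _)]
      _ ≤ 2 * H * (C1 * (R : ℝ≥0∞) ^ ((d:ℝ) + (β - (d:ℝ))))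
          + (2 * H * (R : ℝ≥0∞) ^ (α + β)) * (C2 * (R : ℝ≥0∞) ^ ((d:ℝ) + -((d:ℝ) + α))) := by
          gcongr
          · exact hC1 R hR
          · exact hC2 R hR
      _ = 2 * H * (C1 * (R : ℝ≥0∞) ^ β)
          + (2 * H * (R : ℝ≥0∞) ^ (α + β)) * (C2 * (R : ℝ≥0∞) ^ (-α)) := by
          rw [show (d:ℝ) + (β - (d:ℝ)) = β by ring, show (d:ℝ) + -((d:ℝ) + α) = -α by ring]
      _ = (2*(C1+C2)) * (R : ℝ≥0∞) ^ β * H := by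
          rw [← hpow]
          ring
      _ ≤ (2*(C1+C2)) * (R : ℝ≥0∞) ^ β * holderNorm (α + β) f := by gcongr
      _ = ((2*(C1+C2)).toNNReal : ℝ≥0∞) * (R : ℝ≥0∞) ^ β * holderNorm (α + β) f := by rw [hc]
  -- ### Case γ = α + β > 1
  · obtain ⟨C3, hC3top, hC3⟩ := small_int d hd0 (s := 1 - ((d:ℝ) + α))
      (by push_cast; linarith) (by linarith)
    obtain ⟨C4, hC4top, hC4⟩ := big_int d hd0 (s := (α + β - 1) - ((d:ℝ) + α))
      (by linarith)
    refine ⟨((d:ℝ≥0∞)*(C3+C4)).toNNReal, ?_⟩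
    have hctop : ((d:ℝ≥0∞)*(C3+C4)) ≠ ⊤ := by
      refine ENNReal.mul_ne_top (by simp) (by simp [hC3top, hC4top])
    have hc : (((d:ℝ≥0∞)*(C3+C4)).toNNReal : ℝ≥0∞) = (d:ℝ≥0∞)*(C3+C4) :=
      ENNReal.coe_toNNReal hctop
    intro f hf x k
    by_cases hk : k = 0
    · simp only [hk, add_zero, sub_self, nnnorm_zero, ENNReal.coe_zero, ENNReal.zero_div,
        lintegral_zero]
      exact zero_le
    have hγ2 : α + β < 2 := by linarith
    have hτ : (0:ℝ) < α + β - 1 := by linarith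
    set S := ∑ i : Fin d, hSemi (α + β - 1) (pd i f) with hSdef
    have hSle : S ≤ holderNorm (α + β) f := by
      rw [holderNorm, if_neg (not_lt.2 hgt.le), if_pos hγ2]
      exact le_add_self
    have hStop : S ≠ ⊤ := by
      intro hc
      rw [hc] at hSle
      exact absurd (top_le_iff.1 hSle) hf.2.ne
    set L : ℝ := S.toReal with hLdef
    have hL0 : 0 ≤ L := ENNReal.toReal_nonneg
    -- differentiability
    have hfloor : 1 ≤ ⌊α + β⌋₊ := by
      refine Nat.le_floor ?_
      push_cast
      linarith
    have hdiff : Differentiable ℝ f := by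
      refine (hf.1).differentiable ?_
      exact_mod_cast (Nat.one_le_iff_ne_zero.mp hfloor)
    -- real Hölder bound for partial derivatives
    have hpdR : ∀ (i : Fin d) (y z : E d), ‖pd i f y - pd i f z‖ ≤ L * ‖y - z‖ ^ (α + β - 1) := by
      intro i y z
      have h1 : (‖pd i f (z + (y - z)) - pd i f z‖₊ : ℝ≥0∞)
          ≤ hSemi (α + β - 1) (pd i f) * (‖y - z‖₊ : ℝ≥0∞) ^ (α + β - 1) :=
        hSemi_le hτ (pd i f) z (y - z)
      have h2 : hSemi (α + β - 1) (pd i f) ≤ S :=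
        Finset.single_le_sum (f := fun j => hSemi (α + β - 1) (pd j f))
          (fun j _ => zero_le) (Finset.mem_univ i)
      have h3 : (‖pd i f y - pd i f z‖₊ : ℝ≥0∞) ≤ S * (‖y - z‖₊ : ℝ≥0∞) ^ (α + β - 1) := by
        rw [show y = z + (y - z) by abel] ; rw [show z + (y - z) - z = y - z by abel]
        exact h1.trans (by gcongr)
      have hrhs : S * (‖y - z‖₊ : ℝ≥0∞) ^ (α + β - 1) ≠ ⊤ :=
        ENNReal.mul_ne_top hStop (ENNReal.rpow_ne_top_of_nonneg hτ.le ENNReal.coe_ne_top)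
      have h4 := ENNReal.toReal_mono hrhs h3
      rw [ENNReal.toReal_mul, ← ENNReal.toReal_rpow] at h4
      simpa [coe_nnnorm] using h4
    have hnumR : ∀ u w : E d, ∀ y : E d,
        ‖(f (y + u + w) - f (y + u)) - (f (y + w) - f y)‖
          ≤ ((d:ℝ) * L * ‖u‖ ^ (α + β - 1)) * ‖w‖ :=
      fun u w y => diff_diff_le f hdiff hL0 hpdR y u w
    -- conversion to ℝ≥0∞
    have hconv : ∀ u w : E d,
        ENNReal.ofReal (((d:ℝ) * L * ‖u‖ ^ (α + β - 1)) * ‖w‖)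
          = (d:ℝ≥0∞) * S * (‖u‖₊ : ℝ≥0∞) ^ (α + β - 1) * (‖w‖₊ : ℝ≥0∞) := by
      intro u w
      rw [ENNReal.ofReal_mul (by positivity), ENNReal.ofReal_mul (by positivity),
        ENNReal.ofReal_mul (by positivity), ofReal_norm_eq_enorm, enorm_eq_nnnorm,
        ENNReal.ofReal_natCast, ENNReal.ofReal_toReal hStop]
      congr 1
      congr 1
      rw [← enorm_eq_nnnorm, ← ofReal_norm_eq_enorm, ← ENNReal.ofReal_rpow_of_nonneg (norm_nonneg u) hτ.le]
    have hnum : ∀ u w y : E d,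
        (‖(f (y + u + w) - f (y + u)) - (f (y + w) - f y)‖₊ : ℝ≥0∞)
          ≤ (d:ℝ≥0∞) * S * (‖u‖₊ : ℝ≥0∞) ^ (α + β - 1) * (‖w‖₊ : ℝ≥0∞) := by
      intro u w y
      rw [← enorm_eq_nnnorm, ← ofReal_norm_eq_enorm, ← hconv u w]
      exact ENNReal.ofReal_le_ofReal (hnumR u w y)
    set R : ℝ≥0 := ‖k‖₊ with hRdef
    have hR : R ≠ 0 := by simpa [hRdef] using hk
    have hRne0 : (R : ℝ≥0∞) ≠ 0 := by simpa using hR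
    -- the two numerator bounds
    have hnum_small : ∀ h : E d,
        (‖Ediff f h (x + k) - Ediff f h x‖₊ : ℝ≥0∞)
          ≤ (d:ℝ≥0∞) * S * (R : ℝ≥0∞) ^ (α + β - 1) * (‖h‖₊ : ℝ≥0∞) := by
      intro h
      have := hnum k h x
      simpa [Ediff] using this
    have hnum_big : ∀ h : E d,
        (‖Ediff f h (x + k) - Ediff f h x‖₊ : ℝ≥0∞)
          ≤ (d:ℝ≥0∞) * S * (‖h‖₊ : ℝ≥0∞) ^ (α + β - 1) * (R : ℝ≥0∞) := by
      intro h
      have h1 := hnum h k x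
      have heq : (f (x + h + k) - f (x + h)) - (f (x + k) - f x)
          = Ediff f h (x + k) - Ediff f h x := by
        simp only [Ediff]
        rw [show x + h + k = x + k + h by abel]
        ring
      rw [heq] at h1
      exact h1
    -- integrand bounds
    have hint_small : ∀ h ∈ Metric.ball (0 : E d) (R:ℝ),
        (‖Ediff f h (x + k) - Ediff f h x‖₊ : ℝ≥0∞) / (‖h‖₊ : ℝ≥0∞) ^ ((d : ℝ) + α)
          ≤ ((d:ℝ≥0∞) * S * (R : ℝ≥0∞) ^ (α + β - 1)) * (‖h‖₊ : ℝ≥0∞) ^ (1 - ((d:ℝ) + α)) := by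
      intro h _
      by_cases hh : h = 0
      · simp [hh, Ediff]
      · have hne : (‖h‖₊ : ℝ≥0∞) ≠ 0 := by simpa using hh
        calc (‖Ediff f h (x + k) - Ediff f h x‖₊ : ℝ≥0∞) / (‖h‖₊ : ℝ≥0∞) ^ ((d : ℝ) + α)
            ≤ ((d:ℝ≥0∞) * S * (R : ℝ≥0∞) ^ (α + β - 1) * (‖h‖₊ : ℝ≥0∞) ^ (1:ℝ))
                / (‖h‖₊ : ℝ≥0∞) ^ ((d : ℝ) + α) := by
              refine ENNReal.div_le_div_right ?_ _
              rw [ENNReal.rpow_one]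
              exact hnum_small h
          _ = ((d:ℝ≥0∞) * S * (R : ℝ≥0∞) ^ (α + β - 1)) * (‖h‖₊ : ℝ≥0∞) ^ ((1:ℝ) - ((d:ℝ) + α)) :=
              div_rpow_collect hne ENNReal.coe_ne_top _ _ _
    have hint_big : ∀ h ∈ (Metric.ball (0 : E d) (R:ℝ))ᶜ,
        (‖Ediff f h (x + k) - Ediff f h x‖₊ : ℝ≥0∞) / (‖h‖₊ : ℝ≥0∞) ^ ((d : ℝ) + α)
          ≤ ((d:ℝ≥0∞) * S * (R : ℝ≥0∞)) * (‖h‖₊ : ℝ≥0∞) ^ ((α + β - 1) - ((d:ℝ) + α)) := by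
      intro h hh
      rw [Set.mem_compl_iff, mem_ball_zero_iff, not_lt] at hh
      have hhne : h ≠ 0 := by
        intro hc
        rw [hc, norm_zero] at hh
        have : (0:ℝ) < R := by positivity
        linarith
      have hne : (‖h‖₊ : ℝ≥0∞) ≠ 0 := by simpa using hhne
      calc (‖Ediff f h (x + k) - Ediff f h x‖₊ : ℝ≥0∞) / (‖h‖₊ : ℝ≥0∞) ^ ((d : ℝ) + α)
          ≤ (((d:ℝ≥0∞) * S * (R : ℝ≥0∞)) * (‖h‖₊ : ℝ≥0∞) ^ (α + β - 1))
              / (‖h‖₊ : ℝ≥0∞) ^ ((d : ℝ) + α) := by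
            refine ENNReal.div_le_div_right ?_ _
            calc (‖Ediff f h (x + k) - Ediff f h x‖₊ : ℝ≥0∞)
                ≤ (d:ℝ≥0∞) * S * (‖h‖₊ : ℝ≥0∞) ^ (α + β - 1) * (R : ℝ≥0∞) := hnum_big h
              _ = ((d:ℝ≥0∞) * S * (R : ℝ≥0∞)) * (‖h‖₊ : ℝ≥0∞) ^ (α + β - 1) := by ring
        _ = ((d:ℝ≥0∞) * S * (R : ℝ≥0∞)) * (‖h‖₊ : ℝ≥0∞) ^ ((α + β - 1) - ((d:ℝ) + α)) :=
            div_rpow_collect hne ENNReal.coe_ne_top _ _ _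
    have hpow1 : (R : ℝ≥0∞) ^ (α + β - 1) * (R : ℝ≥0∞) ^ ((1:ℝ) - α) = (R : ℝ≥0∞) ^ β := by
      rw [← ENNReal.rpow_add _ _ hRne0 ENNReal.coe_ne_top]
      norm_num
    have hpow2 : (R : ℝ≥0∞) * (R : ℝ≥0∞) ^ (β - (1:ℝ)) = (R : ℝ≥0∞) ^ β := by
      nth_rewrite 1 [← ENNReal.rpow_one (R : ℝ≥0∞)]
      rw [← ENNReal.rpow_add _ _ hRne0 ENNReal.coe_ne_top]
      norm_num
    calc (∫⁻ h, (‖Ediff f h (x + k) - Ediff f h x‖₊ : ℝ≥0∞) / (‖h‖₊ : ℝ≥0∞) ^ ((d : ℝ) + α))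
        = (∫⁻ h in Metric.ball (0 : E d) (R:ℝ),
            (‖Ediff f h (x + k) - Ediff f h x‖₊ : ℝ≥0∞) / (‖h‖₊ : ℝ≥0∞) ^ ((d : ℝ) + α))
          + (∫⁻ h in (Metric.ball (0 : E d) (R:ℝ))ᶜ,
            (‖Ediff f h (x + k) - Ediff f h x‖₊ : ℝ≥0∞) / (‖h‖₊ : ℝ≥0∞) ^ ((d : ℝ) + α)) :=
          (lintegral_add_compl _ measurableSet_ball).symm
      _ ≤ (∫⁻ h in Metric.ball (0 : E d) (R:ℝ),
            ((d:ℝ≥0∞) * S * (R : ℝ≥0∞) ^ (α + β - 1)) * (‖h‖₊ : ℝ≥0∞) ^ ((1:ℝ) - ((d:ℝ) + α)))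
          + (∫⁻ h in (Metric.ball (0 : E d) (R:ℝ))ᶜ,
              ((d:ℝ≥0∞) * S * (R : ℝ≥0∞)) * (‖h‖₊ : ℝ≥0∞) ^ ((α + β - 1) - ((d:ℝ) + α))) :=
          add_le_add (setLIntegral_mono' measurableSet_ball hint_small)
            (setLIntegral_mono' measurableSet_ball.compl hint_big)
      _ = ((d:ℝ≥0∞) * S * (R : ℝ≥0∞) ^ (α + β - 1)) *
            (∫⁻ h in Metric.ball (0 : E d) (R:ℝ), (‖h‖₊ : ℝ≥0∞) ^ ((1:ℝ) - ((d:ℝ) + α)))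
          + ((d:ℝ≥0∞) * S * (R : ℝ≥0∞)) *
            (∫⁻ h in (Metric.ball (0 : E d) (R:ℝ))ᶜ,
              (‖h‖₊ : ℝ≥0∞) ^ ((α + β - 1) - ((d:ℝ) + α))) := by
          rw [lintegral_const_mul _ (hmeas _), lintegral_const_mul _ (hmeas _)]
      _ ≤ ((d:ℝ≥0∞) * S * (R : ℝ≥0∞) ^ (α + β - 1)) *
            (C3 * (R : ℝ≥0∞) ^ ((d:ℝ) + ((1:ℝ) - ((d:ℝ) + α))))
          + ((d:ℝ≥0∞) * S * (R : ℝ≥0∞)) *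
            (C4 * (R : ℝ≥0∞) ^ ((d:ℝ) + ((α + β - 1) - ((d:ℝ) + α)))) := by
          gcongr
          · exact hC3 R hR
          · exact hC4 R hR
      _ = ((d:ℝ≥0∞) * S * (R : ℝ≥0∞) ^ (α + β - 1)) * (C3 * (R : ℝ≥0∞) ^ ((1:ℝ) - α))
          + ((d:ℝ≥0∞) * S * (R : ℝ≥0∞)) * (C4 * (R : ℝ≥0∞) ^ (β - (1:ℝ))) := by
          rw [show (d:ℝ) + ((1:ℝ) - ((d:ℝ) + α)) = (1:ℝ) - α by ring,
            show (d:ℝ) + ((α + β - 1) - ((d:ℝ) + α)) = β - (1:ℝ) by ring]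
      _ = ((d:ℝ≥0∞)*(C3+C4)) * (R : ℝ≥0∞) ^ β * S := by
          have e1 : ((d:ℝ≥0∞) * S * (R : ℝ≥0∞) ^ (α + β - 1)) * (C3 * (R : ℝ≥0∞) ^ ((1:ℝ) - α))
              = (d:ℝ≥0∞) * C3 * ((R : ℝ≥0∞) ^ (α + β - 1) * (R : ℝ≥0∞) ^ ((1:ℝ) - α)) * S := by
            ring
          have e2 : ((d:ℝ≥0∞) * S * (R : ℝ≥0∞)) * (C4 * (R : ℝ≥0∞) ^ (β - (1:ℝ)))
              = (d:ℝ≥0∞) * C4 * ((R : ℝ≥0∞) * (R : ℝ≥0∞) ^ (β - (1:ℝ))) * S := by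
            ring
          rw [e1, e2, hpow1, hpow2]
          ring
      _ ≤ ((d:ℝ≥0∞)*(C3+C4)) * (R : ℝ≥0∞) ^ β * holderNorm (α + β) f := by gcongr
      _ = (((d:ℝ≥0∞)*(C3+C4)).toNNReal : ℝ≥0∞) * (R : ℝ≥0∞) ^ β * holderNorm (α + β) f := by
          rw [hc]
end
end

section
/- Let d ≥ 1 and γ ∈ (2,3). There exists a constant c, depending only on d and γ, such that for every f ∈ C^γ(ℝ^d) and all x, h, k ∈ ℝ^d: |F_h f(x+k) − F_h f(x)| ≤ c·min(|k|^{γ−2}·|h|^2, |h|^{γ−1}·|k|)·‖f‖_{C^γ}, where F_h f(x) = f(x+h) − f(x) − ∇f(x)·h. -/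
open MeasureTheory ENNReal NNReal

noncomputable section

/-- Compensated difference operator `F_h f(x) = f(x+h) - f(x) - ∇f(x)·h`. -/
def Fdiff {d : ℕ} (f : E d → ℝ) (h x : E d) : ℝ := f (x + h) - f x - fderiv ℝ f x h

/-! ### Auxiliary lemmas -/

lemma euclid_expand {d : ℕ} (u : E d) :
    u = ∑ i : Fin d, u i • EuclideanSpace.single i 1 := by
  have := (EuclideanSpace.basisFun (Fin d) ℝ).toBasis.sum_repr u
  simpa [EuclideanSpace.basisFun_apply] using this.symm

lemma coord_le_norm {d : ℕ} (u : E d) (i : Fin d) : |u i| ≤ ‖u‖ := by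
  have h := abs_real_inner_le_norm (EuclideanSpace.single i (1:ℝ)) u
  simpa [EuclideanSpace.inner_single_left] using h

/-- The operator norm of a bilinear form is bounded by the sum of the absolute values of its
matrix entries. -/
lemma bilin_norm_le {d : ℕ} (B : E d →L[ℝ] E d →L[ℝ] ℝ) :
    ‖B‖ ≤ ∑ i : Fin d, ∑ j : Fin d,
      |B (EuclideanSpace.single i 1) (EuclideanSpace.single j 1)| := by
  have hS : (0:ℝ) ≤ ∑ i : Fin d, ∑ j : Fin d,
      |B (EuclideanSpace.single i 1) (EuclideanSpace.single j 1)| := by positivity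
  refine ContinuousLinearMap.opNorm_le_bound _ hS (fun u => ?_)
  refine ContinuousLinearMap.opNorm_le_bound _ (by positivity) (fun v => ?_)
  have h1 : B u v = ∑ i : Fin d, u i * (B (EuclideanSpace.single i 1) v) := by
    conv_lhs => rw [euclid_expand u]
    rw [map_sum]
    simp [smul_eq_mul]
  have h2 : ∀ i, B (EuclideanSpace.single i 1) v
      = ∑ j : Fin d, v j * B (EuclideanSpace.single i 1) (EuclideanSpace.single j 1) := by
    intro i
    conv_lhs => rw [euclid_expand v]
    rw [map_sum]
    simp [smul_eq_mul]
  have expand : B u v = ∑ i : Fin d, ∑ j : Fin d,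
      u i * v j * B (EuclideanSpace.single i 1) (EuclideanSpace.single j 1) := by
    rw [h1]
    refine Finset.sum_congr rfl fun i _ => ?_
    rw [h2, Finset.mul_sum]
    exact Finset.sum_congr rfl fun j _ => by ring
  rw [expand]
  calc |∑ i : Fin d, ∑ j : Fin d, u i * v j * B (EuclideanSpace.single i 1) (EuclideanSpace.single j 1)|
      ≤ ∑ i : Fin d, ∑ j : Fin d, |u i * v j * B (EuclideanSpace.single i 1) (EuclideanSpace.single j 1)| := by
        refine (Finset.abs_sum_le_sum_abs _ _).trans ?_
        exact Finset.sum_le_sum fun i _ => Finset.abs_sum_le_sum_abs _ _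
    _ ≤ ∑ i : Fin d, ∑ j : Fin d, |B (EuclideanSpace.single i 1) (EuclideanSpace.single j 1)| * ‖u‖ * ‖v‖ := by
        refine Finset.sum_le_sum fun i _ => Finset.sum_le_sum fun j _ => ?_
        rw [abs_mul, abs_mul]
        calc |u i| * |v j| * |B _ _| ≤ ‖u‖ * ‖v‖ * |B _ _| := by
              gcongr <;> [exact coord_le_norm u i; exact coord_le_norm v j]
          _ = |B _ _| * ‖u‖ * ‖v‖ := by ring
    _ = (∑ i : Fin d, ∑ j : Fin d, |B (EuclideanSpace.single i 1) (EuclideanSpace.single j 1)|) * ‖u‖ * ‖v‖ := by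
        rw [Finset.sum_mul, Finset.sum_mul]
        refine Finset.sum_congr rfl fun i _ => ?_
        rw [Finset.sum_mul, Finset.sum_mul]

section Core

variable {d : ℕ} {γ : ℝ} (hγ1 : 0 < γ - 2) {f : E d → ℝ} (hf2 : ContDiff ℝ 2 f)
  {M : ℝ} (hM : 0 ≤ M)
  (key : ∀ y z : E d, ‖fderiv ℝ (fderiv ℝ f) (y + z) - fderiv ℝ (fderiv ℝ f) y‖
    ≤ M * ‖z‖ ^ (γ - 2))

include hγ1 hf2 hM key in
/-- The real-variable core of the theorem. -/
theorem core (x h k : E d) :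
    ‖Fdiff f h (x + k) - Fdiff f h x‖ ≤
      M * min (‖k‖ ^ (γ - 2) * ‖h‖ ^ (2:ℝ)) (‖h‖ ^ (γ - 1) * ‖k‖) := by
  set A := fderiv ℝ f with hAdef
  set A' := fderiv ℝ A with hA'def
  have hfd : Differentiable ℝ f := hf2.differentiable (by norm_num)
  have hA : ∀ y, HasFDerivAt f (A y) y := fun y => (hfd y).hasFDerivAt
  have hAc1 : ContDiff ℝ 1 A := hf2.fderiv_right (by norm_num)
  have hAd : Differentiable ℝ A := hAc1.differentiable one_ne_zero
  have hA' : ∀ y, HasFDerivAt A (A' y) y := fun y => (hAd y).hasFDerivAt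
  have symm : ∀ y v w, A' y v w = A' y w v := fun y =>
    second_derivative_symmetric hA (hA' y)
  -- translates
  have hAt : ∀ (z y : E d), HasFDerivAt (fun y => A (y + z)) (A' (y + z)) y := by
    intro z y
    have := (hA' (y + z)).comp y ((hasFDerivAt_id y).add_const z)
    exact this
  have hft : ∀ (z y : E d), HasFDerivAt (fun y => f (y + z)) (A (y + z)) y := by
    intro z y
    have := (hA (y + z)).comp y ((hasFDerivAt_id y).add_const z)
    exact this
  -- Lipschitz bound for y ↦ A (y+z) - A y
  have lem_w : ∀ (z y₁ y₂ : E d),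
      ‖(A (y₂ + z) - A y₂) - (A (y₁ + z) - A y₁)‖ ≤ (M * ‖z‖ ^ (γ - 2)) * ‖y₂ - y₁‖ := by
    intro z y₁ y₂
    have hder : ∀ y ∈ (Set.univ : Set (E d)),
        HasFDerivWithinAt (fun y => A (y + z) - A y) (A' (y + z) - A' y) Set.univ y :=
      fun y _ => ((hAt z y).sub (hA' y)).hasFDerivWithinAt
    have bound : ∀ y ∈ (Set.univ : Set (E d)),
        ‖A' (y + z) - A' y‖ ≤ M * ‖z‖ ^ (γ - 2) := fun y _ => key y z
    exact convex_univ.norm_image_sub_le_of_norm_hasFDerivWithin_le hder bound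
      (Set.mem_univ y₁) (Set.mem_univ y₂)
  -- compensated bound for A
  have lem2 : ∀ (y z : E d), ‖A (y + z) - A y - A' y z‖ ≤ (M * ‖z‖ ^ (γ - 2)) * ‖z‖ := by
    intro y z
    have hseg : ∀ w ∈ segment ℝ y (y + z), ‖A' w - A' y‖ ≤ M * ‖z‖ ^ (γ - 2) := by
      intro w hw
      obtain ⟨a, b, ha, hb, hab, rfl⟩ := hw
      have hwy : a • y + b • (y + z) - y = b • z := by
        have : a • y + b • (y + z) = y + b • z := by
          rw [smul_add, ← add_assoc, ← add_smul, hab, one_smul]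
        rw [this]; abel
      have h1 : ‖a • y + b • (y + z) - y‖ ≤ ‖z‖ := by
        rw [hwy, norm_smul]
        calc ‖b‖ * ‖z‖ ≤ 1 * ‖z‖ := by
              gcongr; rw [Real.norm_eq_abs, abs_of_nonneg hb]; linarith
          _ = ‖z‖ := one_mul _
      have := key y (a • y + b • (y + z) - y)
      rw [add_sub_cancel] at this
      refine this.trans ?_
      gcongr
    have hder : ∀ w ∈ segment ℝ y (y + z),
        HasFDerivWithinAt A (A' w) (segment ℝ y (y + z)) w :=
      fun w _ => (hA' w).hasFDerivWithinAt
    have := (convex_segment y (y + z)).norm_image_sub_le_of_norm_hasFDerivWithin_le'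
      hder hseg (left_mem_segment ℝ y (y + z)) (right_mem_segment ℝ y (y + z))
    simpa using this
  -- bound (A)
  have boundA : ‖Fdiff f h (x + k) - Fdiff f h x‖ ≤ M * (‖k‖ ^ (γ - 2) * ‖h‖ ^ (2:ℝ)) := by
    set u : E d → ℝ := fun y => f (y + k) - f y with hu
    set w : E d → (E d →L[ℝ] ℝ) := fun y => A (y + k) - A y with hwdef
    have hud : ∀ y ∈ segment ℝ x (x + h), HasFDerivWithinAt u (w y) (segment ℝ x (x + h)) y :=
      fun y _ => (((hft k y).sub (hA y))).hasFDerivWithinAt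
    have hb : ∀ y ∈ segment ℝ x (x + h), ‖w y - w x‖ ≤ (M * ‖k‖ ^ (γ - 2)) * ‖h‖ := by
      intro y hy
      obtain ⟨a, b, ha, hb', hab, rfl⟩ := hy
      have h1 : ‖a • x + b • (x + h) - x‖ ≤ ‖h‖ := by
        have hwy : a • x + b • (x + h) - x = b • h := by
          have : a • x + b • (x + h) = x + b • h := by
            rw [smul_add, ← add_assoc, ← add_smul, hab, one_smul]
          rw [this]; abel
        rw [hwy, norm_smul]
        calc ‖b‖ * ‖h‖ ≤ 1 * ‖h‖ := by
              gcongr; rw [Real.norm_eq_abs, abs_of_nonneg hb']; linarith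
          _ = ‖h‖ := one_mul _
      refine (lem_w k x _).trans ?_
      gcongr
    have := (convex_segment x (x + h)).norm_image_sub_le_of_norm_hasFDerivWithin_le'
      hud hb (left_mem_segment ℝ x (x + h)) (right_mem_segment ℝ x (x + h))
    rw [add_sub_cancel_left] at this
    have hid : Fdiff f h (x + k) - Fdiff f h x = u (x + h) - u x - (w x) h := by
      simp only [Fdiff, hu, hwdef, ContinuousLinearMap.sub_apply, ← hAdef]
      rw [show x + k + h = x + h + k by abel]
      ring
    rw [hid]
    refine this.trans (le_of_eq ?_)
    rw [Real.rpow_two]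
    ring
  -- bound (B)
  have boundB : ‖Fdiff f h (x + k) - Fdiff f h x‖ ≤ M * (‖h‖ ^ (γ - 1) * ‖k‖) := by
    rcases eq_or_ne h 0 with rfl | hh0
    · simp only [Fdiff, add_zero, sub_self, map_zero, sub_zero, norm_zero]
      positivity
    set g : E d → ℝ := fun y => Fdiff f h y with hg
    have hgd : ∀ y, HasFDerivAt g (A (y + h) - A y - A' y h) y := by
      intro y
      have h3 : HasFDerivAt (fun y => A y h)
          ((ContinuousLinearMap.apply ℝ ℝ h).comp (A' y)) y :=
        (ContinuousLinearMap.apply ℝ ℝ h).hasFDerivAt.comp y (hA' y)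
      have := ((hft h y).sub (hA y)).sub h3
      refine this.congr_fderiv ?_
      ext v
      simp [symm y v h]
    have hder : ∀ y ∈ (Set.univ : Set (E d)),
        HasFDerivWithinAt g (A (y + h) - A y - A' y h) Set.univ y :=
      fun y _ => (hgd y).hasFDerivWithinAt
    have hb : ∀ y ∈ (Set.univ : Set (E d)),
        ‖A (y + h) - A y - A' y h‖ ≤ M * ‖h‖ ^ (γ - 1) := by
      intro y _
      refine (lem2 y h).trans (le_of_eq ?_)
      rw [mul_assoc, ← Real.rpow_add_one (norm_ne_zero_iff.mpr hh0)]
      ring_nf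
    have := convex_univ.norm_image_sub_le_of_norm_hasFDerivWithin_le hder hb
      (Set.mem_univ x) (Set.mem_univ (x + k))
    rw [add_sub_cancel_left] at this
    refine this.trans (le_of_eq ?_)
    ring
  rcases min_cases (‖k‖ ^ (γ - 2) * ‖h‖ ^ (2:ℝ)) (‖h‖ ^ (γ - 1) * ‖k‖) with ⟨hm, _⟩ | ⟨hm, _⟩
  · rw [hm]; exact boundA
  · rw [hm]; exact boundB

end Core

/-- Extract a pointwise real bound from finiteness of the Hölder seminorm. -/
lemma hSemi_bound {d : ℕ} {γ' : ℝ} (hγ' : 0 < γ') (g : E d → ℝ)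
    (hfin : hSemi γ' g ≠ ⊤) (y z : E d) :
    ‖g (y + z) - g y‖ ≤ (hSemi γ' g).toReal * ‖z‖ ^ γ' := by
  rcases eq_or_ne z 0 with rfl | hz
  · simp only [add_zero, sub_self, norm_zero]
    positivity
  have hz0 : (‖z‖₊ : ℝ≥0∞) ^ γ' ≠ 0 := by
    simp [ENNReal.rpow_eq_zero_iff, hz, hγ'.le, not_lt.mpr hγ'.le]
  have hzt : (‖z‖₊ : ℝ≥0∞) ^ γ' ≠ ⊤ :=
    ENNReal.rpow_ne_top_of_nonneg hγ'.le ENNReal.coe_ne_top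
  have hle : (‖g (y + z) - g y‖₊ : ℝ≥0∞) / (‖z‖₊ : ℝ≥0∞) ^ γ' ≤ hSemi γ' g := by
    refine le_trans ?_ (le_iSup _ y)
    exact le_iSup (fun h => (‖g (y + h) - g y‖₊ : ℝ≥0∞) / (‖h‖₊ : ℝ≥0∞) ^ γ') z
  have hle2 : (‖g (y + z) - g y‖₊ : ℝ≥0∞) ≤ hSemi γ' g * (‖z‖₊ : ℝ≥0∞) ^ γ' :=
    (ENNReal.div_le_iff hz0 hzt).mp hle
  have := ENNReal.toReal_mono (ENNReal.mul_ne_top hfin hzt) hle2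
  rw [ENNReal.toReal_mul] at this
  simpa [← ENNReal.toReal_rpow] using this

/-- Identification of iterated partial derivatives with the second derivative. -/
lemma pd_pd_eq {d : ℕ} {f : E d → ℝ} (hf2 : ContDiff ℝ 2 f) (i j : Fin d) (y : E d) :
    pd i (pd j f) y
      = fderiv ℝ (fderiv ℝ f) y (EuclideanSpace.single i 1) (EuclideanSpace.single j 1) := by
  have hAd : Differentiable ℝ (fderiv ℝ f) :=
    (hf2.fderiv_right (m := 1) (by norm_num)).differentiable one_ne_zero
  set L : (E d →L[ℝ] ℝ) →L[ℝ] ℝ := ContinuousLinearMap.apply ℝ ℝ (EuclideanSpace.single j 1)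
    with hL
  have h1 : HasFDerivAt (⇑L ∘ fderiv ℝ f) (L.comp (fderiv ℝ (fderiv ℝ f) y)) y :=
    L.hasFDerivAt.comp y (hAd y).hasFDerivAt
  have h2 : pd j f = ⇑L ∘ fderiv ℝ f := rfl
  show fderiv ℝ (pd j f) y (EuclideanSpace.single i 1) = _
  rw [h2, h1.fderiv]
  rfl

/-- increment bound for compensated differences, `γ ∈ (2,3)`. -/
theorem compensated_difference_increment_bound_two_three
    (d : ℕ) (hd : 1 ≤ d) (γ : ℝ) (hγ : γ ∈ Set.Ioo (2 : ℝ) 3) :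
    ∃ c : ℝ≥0, ∀ f : E d → ℝ, InHolder γ f → ∀ x h k : E d,
      (‖Fdiff f h (x + k) - Fdiff f h x‖₊ : ℝ≥0∞) ≤
        c * min ((‖k‖₊ : ℝ≥0∞) ^ (γ - 2) * (‖h‖₊ : ℝ≥0∞) ^ (2:ℝ))
              ((‖h‖₊ : ℝ≥0∞) ^ (γ - 1) * (‖k‖₊ : ℝ≥0∞)) * holderNorm γ f := by
  obtain ⟨hγ2, hγ3⟩ := hγ
  refine ⟨1, fun f hf x h k => ?_⟩
  obtain ⟨hfc, hfin⟩ := hf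
  have hγ1 : 0 < γ - 2 := by linarith
  have hfloor : ⌊γ⌋₊ = 2 := by
    rw [Nat.floor_eq_iff (by linarith)]
    constructor
    · norm_num; linarith
    · norm_num; linarith
  rw [hfloor] at hfc
  have hf2 : ContDiff ℝ 2 f := by exact_mod_cast hfc
  have hnorm_eq : holderNorm γ f
      = supNorm f + ∑ i : Fin d, ∑ j : Fin d, hSemi (γ - 2) (pd i (pd j f)) := by
    rw [holderNorm, if_neg (by linarith), if_neg (by linarith)]
  set S := ∑ i : Fin d, ∑ j : Fin d, hSemi (γ - 2) (pd i (pd j f)) with hSdef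
  have hSfin : S ≠ ⊤ := by
    intro hT
    rw [hnorm_eq, hT] at hfin
    simp at hfin
  have hterm : ∀ i j, hSemi (γ - 2) (pd i (pd j f)) ≠ ⊤ := by
    intro i j
    refine ne_top_of_le_ne_top hSfin ?_
    calc hSemi (γ - 2) (pd i (pd j f))
        ≤ ∑ j' : Fin d, hSemi (γ - 2) (pd i (pd j' f)) :=
          Finset.single_le_sum (f := fun j' => hSemi (γ - 2) (pd i (pd j' f)))
            (fun _ _ => zero_le) (Finset.mem_univ j)
      _ ≤ S := Finset.single_le_sum (f := fun i' => ∑ j' : Fin d, hSemi (γ - 2) (pd i' (pd j' f)))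
          (fun _ _ => zero_le) (Finset.mem_univ i)
  set M := S.toReal with hMdef
  have hM : 0 ≤ M := ENNReal.toReal_nonneg
  have hMsum : M = ∑ i : Fin d, ∑ j : Fin d, (hSemi (γ - 2) (pd i (pd j f))).toReal := by
    rw [hMdef, hSdef, ENNReal.toReal_sum (fun i _ => by
      exact fun hT => hSfin (by
        rw [hSdef]
        exact (ENNReal.sum_eq_top.mpr ⟨i, Finset.mem_univ i, hT⟩)))]
    exact Finset.sum_congr rfl fun i _ =>
      ENNReal.toReal_sum (fun j _ => hterm i j)
  -- the key second-derivative Hölder bound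
  have key : ∀ y z : E d, ‖fderiv ℝ (fderiv ℝ f) (y + z) - fderiv ℝ (fderiv ℝ f) y‖
      ≤ M * ‖z‖ ^ (γ - 2) := by
    intro y z
    refine (bilin_norm_le _).trans ?_
    rw [hMsum, Finset.sum_mul]
    refine Finset.sum_le_sum fun i _ => ?_
    rw [Finset.sum_mul]
    refine Finset.sum_le_sum fun j _ => ?_
    have hij := hSemi_bound hγ1 (pd i (pd j f)) (hterm i j) y z
    rw [Real.norm_eq_abs, pd_pd_eq hf2, pd_pd_eq hf2] at hij
    simpa using hij
  have realbound := core hγ1 hf2 hM key x h k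
  -- pass to extended nonnegative reals
  have h1 : (‖Fdiff f h (x + k) - Fdiff f h x‖₊ : ℝ≥0∞)
      ≤ ENNReal.ofReal (M * min (‖k‖ ^ (γ - 2) * ‖h‖ ^ (2:ℝ)) (‖h‖ ^ (γ - 1) * ‖k‖)) := by
    rw [← enorm_eq_nnnorm, ← ofReal_norm]
    exact ENNReal.ofReal_le_ofReal realbound
  have hofmin : ENNReal.ofReal (M * min (‖k‖ ^ (γ - 2) * ‖h‖ ^ (2:ℝ)) (‖h‖ ^ (γ - 1) * ‖k‖))
      = S * min ((‖k‖₊ : ℝ≥0∞) ^ (γ - 2) * (‖h‖₊ : ℝ≥0∞) ^ (2:ℝ))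
          ((‖h‖₊ : ℝ≥0∞) ^ (γ - 1) * (‖k‖₊ : ℝ≥0∞)) := by
    have hmono : Monotone ENNReal.ofReal := fun _ _ hh => ENNReal.ofReal_le_ofReal hh
    rw [ENNReal.ofReal_mul hM, ENNReal.ofReal_toReal hSfin, hmono.map_min]
    congr 2
    · rw [ENNReal.ofReal_mul (by positivity),
        ← ENNReal.ofReal_rpow_of_nonneg (norm_nonneg k) hγ1.le,
        ← ENNReal.ofReal_rpow_of_nonneg (norm_nonneg h) (by norm_num),
        ofReal_norm, ofReal_norm, enorm_eq_nnnorm, enorm_eq_nnnorm]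
    · rw [ENNReal.ofReal_mul (by positivity),
        ← ENNReal.ofReal_rpow_of_nonneg (norm_nonneg h) (by linarith),
        ofReal_norm, ofReal_norm, enorm_eq_nnnorm, enorm_eq_nnnorm]
  rw [hofmin] at h1
  refine h1.trans ?_
  rw [ENNReal.coe_one, one_mul, mul_comm, hnorm_eq]
  exact mul_le_mul' le_rfl le_add_self
end
end
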